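/- The following are equivalent: (1) 𝒯 is non-discriminatory; (2) 𝒯 is non-discriminatory for binary sets; (3) 𝒯 is identified; (4) 𝒯 admits fair valuations; (5) 𝒯 admits fair valuations for binary sets. -/

import Mathlib

open MeasureTheory Set

section Defs

variable {Θ : Type*} [Fintype Θ]

/-- The value function `v_A(s) = max_{a ∈ A} ∑_θ a(θ) s(θ)`. -/
noncomputable def valueFn (A : Set (Θ → ℝ)) (s : Θ → ℝ) : ℝ :=
  sSup ((fun a => ∑ θ, a θ * s θ) '' A)

/-- A binary set: one or two elements. -/
def Binary (A : Set (Θ → ℝ)) : Prop := A.ncard = 1 ∨ A.ncard = 2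

/-- An information structure on `S`: a Borel probability measure supported on `S`. -/
def IsInfoStructure (S : Set (Θ → ℝ)) (π : Measure (Θ → ℝ)) : Prop :=
  IsProbabilityMeasure π ∧ π Sᶜ = 0

/-- The skill distribution `p_π(θ) = ∫_S s(θ) dπ(s)` induced by `π`. -/
noncomputable def skillDist (S : Set (Θ → ℝ)) (π : Measure (Θ → ℝ)) : Θ → ℝ :=
  fun θ => ∫ s in S, s θ ∂π

/-- `S` is non-discriminatory. -/
def NonDiscriminatory (S : Set (Θ → ℝ)) : Prop :=
  ∀ π π' : Measure (Θ → ℝ), IsInfoStructure S π → IsInfoStructure S π' →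
    ∀ A : Set (Θ → ℝ), A.Finite → A.Nonempty →
      skillDist S π = skillDist S π' →
      ∫ t in S, valueFn A t ∂π = ∫ t in S, valueFn A t ∂π'

/-- `S` is non-discriminatory for binary sets. -/
def NonDiscriminatoryBinary (S : Set (Θ → ℝ)) : Prop :=
  ∀ π π' : Measure (Θ → ℝ), IsInfoStructure S π → IsInfoStructure S π' →
    ∀ A : Set (Θ → ℝ), Binary A →
      skillDist S π = skillDist S π' →
      ∫ t in S, valueFn A t ∂π = ∫ t in S, valueFn A t ∂π'

/-- `S` is identified. -/
def Identified (S : Set (Θ → ℝ)) : Prop :=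
  ∀ π π' : Measure (Θ → ℝ), IsInfoStructure S π → IsInfoStructure S π' →
    skillDist S π = skillDist S π' → π = π'

/-- `S` admits fair valuations. -/
def FairValuations (S : Set (Θ → ℝ)) : Prop :=
  ∀ A : Set (Θ → ℝ), A.Finite → A.Nonempty →
    ∃ α : Θ → ℝ, ∀ t ∈ S, valueFn A t = ∑ θ, α θ * t θ

/-- `S` admits fair valuations for binary sets. -/
def FairValuationsBinary (S : Set (Θ → ℝ)) : Prop :=
  ∀ A : Set (Θ → ℝ), Binary A →
    ∃ α : Θ → ℝ, ∀ t ∈ S, valueFn A t = ∑ θ, α θ * t θ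

/-- `W_A(p)`: value of optimal information design with skill distribution `p`,
over information structures on `S`. -/
noncomputable def Wfn (A S : Set (Θ → ℝ)) (p : Θ → ℝ) : ℝ :=
  sSup {x | ∃ π : Measure (Θ → ℝ), IsInfoStructure S π ∧ skillDist S π = p ∧
    x = ∫ t in S, valueFn A t ∂π}

/-- A function is affine on `T`. -/
def AffineOnSet (W : (Θ → ℝ) → ℝ) (T : Set (Θ → ℝ)) : Prop :=
  ∀ p ∈ T, ∀ q ∈ T, ∀ γ : ℝ, 0 ≤ γ → γ ≤ 1 →
    W (γ • p + (1 - γ) • q) = γ * W p + (1 - γ) * W q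

end Defs

set_option linter.unusedSectionVars false

section AuxAll
variable {Θ : Type*} [Fintype Θ]
variable {Θ : Type*} [Fintype Θ]

lemma valueFn_singleton (a s : Θ → ℝ) : valueFn {a} s = ∑ θ, a θ * s θ := by
  simp [valueFn]

lemma valueFn_pair (a b s : Θ → ℝ) :
    valueFn {a, b} s = max (∑ θ, a θ * s θ) (∑ θ, b θ * s θ) := by
  have h : (fun a : Θ → ℝ => ∑ θ, a θ * s θ) '' {a, b}
      = {∑ θ, a θ * s θ, ∑ θ, b θ * s θ} := by
    simp [Set.image_insert_eq]
  rw [valueFn, h, csSup_pair]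

lemma valueFn_insert (a : Θ → ℝ) {B : Set (Θ → ℝ)} (hB : B.Finite) (hne : B.Nonempty)
    (s : Θ → ℝ) :
    valueFn (insert a B) s = max (∑ θ, a θ * s θ) (valueFn B s) := by
  rw [valueFn, Set.image_insert_eq, csSup_insert ((hB.image _).bddAbove) (hne.image _),
    valueFn]

lemma continuous_dot (a : Θ → ℝ) : Continuous fun s : Θ → ℝ => ∑ θ, a θ * s θ :=
  continuous_finset_sum _ fun θ _ => continuous_const.mul (continuous_apply θ)

lemma continuous_valueFn_pair (a b : Θ → ℝ) : Continuous (valueFn {a, b}) := by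
  have : valueFn {a, b} = fun s => max (∑ θ, a θ * s θ) (∑ θ, b θ * s θ) :=
    funext (valueFn_pair a b)
  rw [this]
  exact (continuous_dot a).max (continuous_dot b)

lemma binary_pair (a b : Θ → ℝ) : Binary {a, b} := by
  rcases eq_or_ne a b with rfl | h
  · exact Or.inl (by simp)
  · exact Or.inr (Set.ncard_pair h)

lemma Binary.exists_pair {A : Set (Θ → ℝ)} (h : Binary A) : ∃ a b, A = {a, b} := by
  rcases h with h | h
  · obtain ⟨a, rfl⟩ := Set.ncard_eq_one.mp h
    exact ⟨a, a, (Set.pair_eq_singleton a).symm⟩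
  · obtain ⟨a, b, -, rfl⟩ := Set.ncard_eq_two.mp h
    exact ⟨a, b, rfl⟩

lemma Binary.finite {A : Set (Θ → ℝ)} (h : Binary A) : A.Finite := by
  obtain ⟨a, b, rfl⟩ := h.exists_pair
  exact (Set.finite_singleton b).insert a

lemma Binary.nonempty {A : Set (Θ → ℝ)} (h : Binary A) : A.Nonempty := by
  obtain ⟨a, b, rfl⟩ := h.exists_pair
  exact ⟨a, by simp⟩

variable {Θ : Type*} [Fintype Θ]

lemma exists_sep (D : Finset (Θ → ℝ)) (hD : ∀ d ∈ D, d ≠ 0) :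
    ∃ e : Θ → ℝ, ∀ d ∈ D, ∑ θ, e θ * d θ ≠ 0 := by
  classical
  induction D using Finset.induction_on with
  | empty => exact ⟨0, by simp⟩
  | @insert a D ha ih =>
    obtain ⟨e, he⟩ := ih fun d hd => hD d (Finset.mem_insert_of_mem hd)
    have hane : a ≠ 0 := hD a (Finset.mem_insert_self a D)
    have haa : (0 : ℝ) < ∑ θ, a θ * a θ := by
      obtain ⟨θ0, hθ0⟩ := Function.ne_iff.mp hane
      exact Finset.sum_pos' (fun θ _ => mul_self_nonneg _)
        ⟨θ0, Finset.mem_univ _, mul_self_pos.mpr (by simpa using hθ0)⟩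
    set bad : Set ℝ :=
      (fun d : Θ → ℝ => -(∑ θ, e θ * d θ) / (∑ θ, a θ * d θ))
        '' (↑(insert a D) : Set (Θ → ℝ)) with hbad
    have hbadfin : bad.Finite := ((insert a D).finite_toSet).image _
    obtain ⟨x, hx⟩ := hbadfin.exists_notMem
    refine ⟨fun θ => e θ + x * a θ, fun d hd hzero => ?_⟩
    have hexp : ∑ θ, (e θ + x * a θ) * d θ
        = (∑ θ, e θ * d θ) + x * ∑ θ, a θ * d θ := by
      rw [Finset.mul_sum, ← Finset.sum_add_distrib]
      exact Finset.sum_congr rfl fun θ _ => by ring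
    rw [hexp] at hzero
    by_cases had : (∑ θ, a θ * d θ) = 0
    · rw [had, mul_zero, add_zero] at hzero
      rcases Finset.mem_insert.mp hd with rfl | hdD
      · exact absurd had (ne_of_gt haa)
      · exact he d hdD hzero
    · apply hx
      refine ⟨d, by exact_mod_cast hd, ?_⟩
      field_simp
      linarith

lemma exists_sep_from (F : Finset (Θ → ℝ)) (t0 : Θ → ℝ) :
    ∃ e : Θ → ℝ, ∀ t ∈ F, t ≠ t0 → ∑ θ, e θ * t θ ≠ ∑ θ, e θ * t0 θ := by
  classical
  have hD : ∀ d ∈ (F.filter (· ≠ t0)).image (fun t => t - t0), d ≠ 0 := by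
    intro d hd
    obtain ⟨t, htm, rfl⟩ := Finset.mem_image.mp hd
    exact sub_ne_zero.mpr (Finset.mem_filter.mp htm).2
  obtain ⟨e, he⟩ := exists_sep _ hD
  refine ⟨e, fun t ht hne h => ?_⟩
  refine he (t - t0) (Finset.mem_image_of_mem _ (Finset.mem_filter.mpr ⟨ht, hne⟩)) ?_
  have h2 : ∑ θ, e θ * (t - t0) θ = (∑ θ, e θ * t θ) - ∑ θ, e θ * t0 θ := by
    rw [← Finset.sum_sub_distrib]
    refine Finset.sum_congr rfl fun θ _ => ?_
    have : (t - t0) θ = t θ - t0 θ := rfl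
    rw [this]; ring
  rw [h2, h, sub_self]

lemma kink (F : Finset (Θ → ℝ)) (hF : ∀ t ∈ F, ∑ θ, t θ = 1) (c : (Θ → ℝ) → ℝ)
    (h : ∀ d : Θ → ℝ, ∑ t ∈ F, c t * max (∑ θ, d θ * t θ) 0 = 0) :
    ∀ t0 ∈ F, c t0 = 0 := by
  classical
  intro t0 ht0
  obtain ⟨e, he⟩ := exists_sep_from F t0
  set v : (Θ → ℝ) → ℝ := fun t => ∑ θ, e θ * t θ with hv
  have hex : ∃ ε : ℝ, 0 < ε ∧ ∀ t ∈ F, t ≠ t0 → ε ≤ |v t - v t0| := by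
    set G := F.filter (fun t => t ≠ t0) with hG
    rcases G.eq_empty_or_nonempty with hGe | hGne
    · refine ⟨1, one_pos, fun t ht hne => ?_⟩
      have hmem : t ∈ G := Finset.mem_filter.mpr ⟨ht, hne⟩
      rw [hGe] at hmem
      exact absurd hmem (Finset.notMem_empty t)
    · refine ⟨min 1 (G.inf' hGne fun t => |v t - v t0|), ?_, ?_⟩
      · refine lt_min one_pos ?_
        rw [Finset.lt_inf'_iff]
        intro t htG
        obtain ⟨ht, hne⟩ := Finset.mem_filter.mp htG
        exact abs_pos.mpr (sub_ne_zero.mpr (he t ht hne))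
      · intro t ht hne
        exact le_trans (min_le_right _ _)
          (Finset.inf'_le _ (Finset.mem_filter.mpr ⟨ht, hne⟩))
  obtain ⟨ε, hε, hsep⟩ := hex
  have key : ∀ r : ℝ, ∑ t ∈ F, c t * max (v t - v t0 + r) 0 = 0 := by
    intro r
    have hd := h (fun θ => e θ + (r - v t0))
    have heq : ∑ t ∈ F, c t * max (v t - v t0 + r) 0
        = ∑ t ∈ F, c t * max (∑ θ, (e θ + (r - v t0)) * t θ) 0 := by
      refine Finset.sum_congr rfl fun t ht => ?_
      have h1 : ∑ θ, (e θ + (r - v t0)) * t θ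
          = (∑ θ, e θ * t θ) + (r - v t0) * ∑ θ, t θ := by
        rw [Finset.mul_sum, ← Finset.sum_add_distrib]
        exact Finset.sum_congr rfl fun θ _ => by ring
      rw [h1, hF t ht, mul_one]
      have : v t - v t0 + r = v t + (r - v t0) := by rw [hv]; ring
      rw [this]
    rw [heq]
    exact hd
  set g : (Θ → ℝ) → ℝ := fun t =>
    max (v t - v t0 + ε) 0 + max (v t - v t0 + -ε) 0 - 2 * max (v t - v t0 + 0) 0 with hg
  have hcomb : ∑ t ∈ F, c t * g t = 0 := by
    have hterm : ∀ t ∈ F, c t * g t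
        = c t * max (v t - v t0 + ε) 0 + c t * max (v t - v t0 + -ε) 0
          - 2 * (c t * max (v t - v t0 + 0) 0) := fun t _ => by rw [hg]; ring
    rw [Finset.sum_congr rfl hterm, Finset.sum_sub_distrib, Finset.sum_add_distrib,
      ← Finset.mul_sum, key ε, key (-ε), key 0]
    ring
  have hgt0 : g t0 = ε := by
    simp only [hg, sub_self, zero_add, add_zero]
    rw [max_eq_left hε.le, max_eq_right (by linarith), max_self]
    ring
  have hg0 : ∀ t ∈ F, t ≠ t0 → g t = 0 := by
    intro t ht hne
    have habs := hsep t ht hne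
    rcases le_abs.mp habs with hca | hca
    · simp only [hg]
      rw [max_eq_left (by linarith), max_eq_left (by linarith),
        max_eq_left (by linarith)]
      ring
    · simp only [hg]
      rw [max_eq_right (by linarith), max_eq_right (by linarith),
        max_eq_right (by linarith)]
      ring
  rw [Finset.sum_eq_single_of_mem t0 ht0 (fun t ht hne => by rw [hg0 t ht hne, mul_zero])]
    at hcomb
  rw [hgt0] at hcomb
  rcases mul_eq_zero.mp hcomb with h0 | h0
  · exact h0
  · exact absurd h0 hε.ne'
variable {Θ : Type*} [Fintype Θ]

noncomputable def combo (F : Finset (Θ → ℝ)) (w : (Θ → ℝ) → ℝ) : Measure (Θ → ℝ) :=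
  ∑ t ∈ F, ENNReal.ofReal (w t) • Measure.dirac t

lemma combo_apply (F : Finset (Θ → ℝ)) (w : (Θ → ℝ) → ℝ) {s : Set (Θ → ℝ)}
    (hs : MeasurableSet s) :
    combo F w s = ∑ t ∈ F, ENNReal.ofReal (w t) * s.indicator 1 t := by
  rw [combo, Measure.finset_sum_apply]
  exact Finset.sum_congr rfl fun t _ => by
    rw [Measure.smul_apply, Measure.dirac_apply' _ hs, smul_eq_mul]

lemma combo_isProbability (F : Finset (Θ → ℝ)) (w : (Θ → ℝ) → ℝ)
    (hw : ∀ t ∈ F, 0 ≤ w t) (hsum : ∑ t ∈ F, w t = 1) :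
    IsProbabilityMeasure (combo F w) := by
  constructor
  rw [combo_apply F w MeasurableSet.univ]
  simp only [Set.indicator_univ, Pi.one_apply, mul_one]
  rw [← ENNReal.ofReal_sum_of_nonneg hw, hsum, ENNReal.ofReal_one]

lemma combo_compl (F : Finset (Θ → ℝ)) (w : (Θ → ℝ) → ℝ) {S : Set (Θ → ℝ)}
    (hS : MeasurableSet S) (hF : ↑F ⊆ S) :
    combo F w Sᶜ = 0 := by
  rw [combo_apply F w hS.compl]
  refine Finset.sum_eq_zero fun t ht => ?_
  rw [Set.indicator_of_notMem (by simpa using hF ht), mul_zero]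

lemma combo_integral (F : Finset (Θ → ℝ)) (w : (Θ → ℝ) → ℝ)
    (hw : ∀ t ∈ F, 0 ≤ w t) {f : (Θ → ℝ) → ℝ} (hf : Continuous f) :
    ∫ x, f x ∂(combo F w) = ∑ t ∈ F, w t * f t := by
  rw [combo, integral_finset_sum_measure ?hint]
  · refine Finset.sum_congr rfl fun t ht => ?_
    rw [integral_smul_measure, integral_dirac, smul_eq_mul,
      ENNReal.toReal_ofReal (hw t ht)]
  case hint =>
    intro t _
    refine Integrable.smul_measure ⟨hf.aestronglyMeasurable, ?_⟩ ENNReal.ofReal_ne_top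
    refine HasFiniteIntegral.of_bounded (C := ‖f t‖) ?_
    exact (MeasureTheory.ae_dirac_iff (by
      exact (measurableSet_le (hf.norm.measurable) measurable_const))).mpr le_rfl

lemma restrict_self_of_compl {S : Set (Θ → ℝ)} {μ : Measure (Θ → ℝ)} (h : μ Sᶜ = 0) :
    μ.restrict S = μ := by
  refine Measure.restrict_eq_self_of_ae_mem ?_
  rw [MeasureTheory.ae_iff]
  simpa [Set.compl_def] using h

lemma setIntegral_info {S : Set (Θ → ℝ)} {μ : Measure (Θ → ℝ)} (h : μ Sᶜ = 0)
    (f : (Θ → ℝ) → ℝ) :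
    ∫ t in S, f t ∂μ = ∫ t, f t ∂μ := by rw [restrict_self_of_compl h]

lemma skillDist_combo {S : Set (Θ → ℝ)} (hS : MeasurableSet S) (F : Finset (Θ → ℝ))
    (hF : ↑F ⊆ S) (w : (Θ → ℝ) → ℝ) (hw : ∀ t ∈ F, 0 ≤ w t) :
    skillDist S (combo F w) = fun θ => ∑ t ∈ F, w t * t θ := by
  funext θ
  rw [skillDist, setIntegral_info (combo_compl F w hS hF)]
  exact combo_integral F w hw (continuous_apply θ)


end AuxAll

section Aux4
variable {Θ : Type*} [Fintype Θ]

/-- linear independence of every finite subfamily, elementary form -/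
def Indep (S : Set (Θ → ℝ)) : Prop :=
  ∀ F : Finset (Θ → ℝ), ↑F ⊆ S → ∀ c : (Θ → ℝ) → ℝ,
    (∀ θ, ∑ t ∈ F, c t * t θ = 0) → ∀ t ∈ F, c t = 0

lemma indep_of_fvb {𝒯 : Set (Θ → ℝ)} (h𝒯 : 𝒯 ⊆ stdSimplex ℝ Θ)
    (hfvb : FairValuationsBinary 𝒯) : Indep 𝒯 := by
  intro F hF c hrel
  refine kink F (fun t ht => (h𝒯 (hF ht)).2) c ?_
  intro d
  obtain ⟨α, hα⟩ := hfvb {0, d} (binary_pair 0 d)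
  have hval : ∀ t ∈ F, max (∑ θ, d θ * t θ) 0 = ∑ θ, α θ * t θ := by
    intro t ht
    have h1 := hα t (hF ht)
    rw [valueFn_pair] at h1
    have h0 : ∑ θ, (0 : Θ → ℝ) θ * t θ = 0 := by simp
    rw [h0, max_comm] at h1
    exact h1
  calc ∑ t ∈ F, c t * max (∑ θ, d θ * t θ) 0
      = ∑ t ∈ F, c t * ∑ θ, α θ * t θ :=
        Finset.sum_congr rfl fun t ht => by rw [hval t ht]
    _ = ∑ t ∈ F, ∑ θ, α θ * (c t * t θ) := by
        refine Finset.sum_congr rfl fun t _ => ?_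
        rw [Finset.mul_sum]
        exact Finset.sum_congr rfl fun θ _ => by ring
    _ = ∑ θ, ∑ t ∈ F, α θ * (c t * t θ) := Finset.sum_comm
    _ = ∑ θ, α θ * ∑ t ∈ F, c t * t θ := by
        exact Finset.sum_congr rfl fun θ _ => by rw [Finset.mul_sum]
    _ = 0 := by simp [hrel]

lemma indep_linearIndependent {𝒯 : Set (Θ → ℝ)} (hI : Indep 𝒯) :
    LinearIndependent ℝ (fun x => x : 𝒯 → (Θ → ℝ)) := by
  rw [linearIndependent_subtype_iff, linearIndepOn_iff]
  intro l hl hl0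
  have hsupp : ↑l.support ⊆ 𝒯 := Finsupp.mem_supported ℝ l |>.mp hl
  rw [Finsupp.linearCombination_apply, Finsupp.sum] at hl0
  have hrel : ∀ θ, ∑ t ∈ l.support, l t * t θ = 0 := by
    intro θ
    have h2 := congrFun hl0 θ
    simpa using h2
  have hz := hI l.support hsupp l hrel
  ext t
  by_cases h : t ∈ l.support
  · exact hz t h
  · simpa using Finsupp.notMem_support_iff.mp h

lemma indep_fair {𝒯 : Set (Θ → ℝ)} (hI : Indep 𝒯) (f : (Θ → ℝ) → ℝ) :
    ∃ α : Θ → ℝ, ∀ t ∈ 𝒯, f t = ∑ θ, α θ * t θ := by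
  classical
  have hli : LinearIndepOn ℝ id 𝒯 := indep_linearIndependent hI
  let B := Module.Basis.extend hli
  let ℓ : (Θ → ℝ) →ₗ[ℝ] ℝ := B.constr ℝ (fun i => f i)
  refine ⟨fun θ => ℓ (fun j => if θ = j then 1 else 0), fun t ht => ?_⟩
  have h1 : ℓ t = f t := by
    have hmem : t ∈ hli.extend (Set.subset_univ 𝒯) := hli.subset_extend _ ht
    have h2 := B.constr_basis ℝ (fun i => f i) ⟨t, hmem⟩
    rwa [Module.Basis.extend_apply_self] at h2
  rw [← h1]
  conv_lhs => rw [pi_eq_sum_univ t]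
  rw [map_sum]
  refine Finset.sum_congr rfl fun θ _ => ?_
  rw [_root_.map_smul, smul_eq_mul, mul_comm]

end Aux4

section Aux5
variable {Θ : Type*} [Fintype Θ]

lemma sum_c_zero {F : Finset (Θ → ℝ)} {c : (Θ → ℝ) → ℝ}
    (hone : ∀ t ∈ F, ∑ θ, t θ = 1) (hrel : ∀ θ, ∑ t ∈ F, c t * t θ = 0) :
    ∑ t ∈ F, c t = 0 := by
  calc ∑ t ∈ F, c t = ∑ t ∈ F, c t * ∑ θ, t θ := by
        refine Finset.sum_congr rfl fun t ht => by rw [hone t ht, mul_one]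
    _ = ∑ t ∈ F, ∑ θ, c t * t θ := by
        exact Finset.sum_congr rfl fun t _ => by rw [Finset.mul_sum]
    _ = ∑ θ, ∑ t ∈ F, c t * t θ := Finset.sum_comm
    _ = 0 := by simp [hrel]

lemma max_sub_max_neg (x : ℝ) : max x 0 - max (-x) 0 = x := by
  rcases le_or_gt x 0 with h | h
  · rw [max_eq_right h, max_eq_left (by linarith)]; ring
  · rw [max_eq_left h.le, max_eq_right (by linarith)]; ring

lemma valueFn_zero_pair (d : Θ → ℝ) (t : Θ → ℝ) :
    valueFn ({0, d} : Set (Θ → ℝ)) t = max (∑ θ, d θ * t θ) 0 := by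
  rw [valueFn_pair]
  have h0 : ∑ θ, (0 : Θ → ℝ) θ * t θ = 0 := by simp
  rw [h0, max_comm]

lemma indep_of_ndb {𝒯 : Set (Θ → ℝ)} (h𝒯 : 𝒯 ⊆ stdSimplex ℝ Θ) (h𝒯c : IsClosed 𝒯)
    (hndb : NonDiscriminatoryBinary 𝒯) : Indep 𝒯 := by
  classical
  intro F hF c hrel
  have hone : ∀ t ∈ F, ∑ θ, t θ = 1 := fun t ht => (h𝒯 (hF ht)).2
  have hc0 : ∑ t ∈ F, c t = 0 := sum_c_zero hone hrel
  set cp : (Θ → ℝ) → ℝ := fun t => max (c t) 0 with hcp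
  set cm : (Θ → ℝ) → ℝ := fun t => max (-c t) 0 with hcm
  have hdiff : ∀ t, cp t - cm t = c t := fun t => max_sub_max_neg (c t)
  have hcpn : ∀ t, 0 ≤ cp t := fun t => le_max_right _ _
  have hcmn : ∀ t, 0 ≤ cm t := fun t => le_max_right _ _
  set M := ∑ t ∈ F, cp t with hM
  have hMm : ∑ t ∈ F, cm t = M := by
    have h2 : ∑ t ∈ F, (cp t - cm t) = 0 := by
      rw [Finset.sum_congr rfl fun t _ => hdiff t]; exact hc0
    rw [Finset.sum_sub_distrib] at h2
    linarith
  intro t0 ht0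
  by_cases hM0 : M = 0
  · have hsum0 : ∑ t ∈ F, cp t = 0 := by rw [← hM]; exact hM0
    have hsum0' : ∑ t ∈ F, cm t = 0 := by rw [hMm]; exact hM0
    have h1 : cp t0 = 0 :=
      (Finset.sum_eq_zero_iff_of_nonneg fun t _ => hcpn t).mp hsum0 t0 ht0
    have h2 : cm t0 = 0 :=
      (Finset.sum_eq_zero_iff_of_nonneg fun t _ => hcmn t).mp hsum0' t0 ht0
    have := hdiff t0
    linarith
  · have hMpos : 0 < M :=
      lt_of_le_of_ne (Finset.sum_nonneg fun t _ => hcpn t) (Ne.symm hM0)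
    set w : (Θ → ℝ) → ℝ := fun t => cp t / M with hw
    set w' : (Θ → ℝ) → ℝ := fun t => cm t / M with hw'
    have h𝒯m : MeasurableSet 𝒯 := h𝒯c.measurableSet
    have hwn : ∀ t ∈ F, 0 ≤ w t := fun t _ => div_nonneg (hcpn t) hMpos.le
    have hwn' : ∀ t ∈ F, 0 ≤ w' t := fun t _ => div_nonneg (hcmn t) hMpos.le
    have hw1 : ∑ t ∈ F, w t = 1 := by
      rw [hw, ← Finset.sum_div, ← hM, div_self hM0]
    have hw1' : ∑ t ∈ F, w' t = 1 := by
      rw [hw', ← Finset.sum_div, hMm, div_self hM0]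
    have hinfo : IsInfoStructure 𝒯 (combo F w) :=
      ⟨combo_isProbability F w hwn hw1, combo_compl F w h𝒯m hF⟩
    have hinfo' : IsInfoStructure 𝒯 (combo F w') :=
      ⟨combo_isProbability F w' hwn' hw1', combo_compl F w' h𝒯m hF⟩
    have hskill : skillDist 𝒯 (combo F w) = skillDist 𝒯 (combo F w') := by
      rw [skillDist_combo h𝒯m F hF w hwn, skillDist_combo h𝒯m F hF w' hwn']
      funext θ
      have hsub : ∑ t ∈ F, (cp t * t θ - cm t * t θ) = 0 := by
        rw [Finset.sum_congr rfl fun t (_ : t ∈ F) =>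
          (sub_mul (cp t) (cm t) (t θ)).symm]
        rw [Finset.sum_congr rfl fun t (_ : t ∈ F) => by rw [hdiff t]]
        exact hrel θ
      rw [Finset.sum_sub_distrib] at hsub
      simp only [hw, hw', div_mul_eq_mul_div]
      rw [← Finset.sum_div, ← Finset.sum_div]
      congr 1
      linarith
    refine kink F hone c ?_ t0 ht0
    intro d
    have hA := hndb (combo F w) (combo F w') hinfo hinfo' {0, d} (binary_pair 0 d) hskill
    rw [setIntegral_info hinfo.2, setIntegral_info hinfo'.2,
      combo_integral F w hwn (continuous_valueFn_pair 0 d),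
      combo_integral F w' hwn' (continuous_valueFn_pair 0 d)] at hA
    calc ∑ t ∈ F, c t * max (∑ θ, d θ * t θ) 0
        = ∑ t ∈ F, (M * (w t - w' t)) * valueFn ({0, d} : Set (Θ → ℝ)) t := by
          refine Finset.sum_congr rfl fun t _ => ?_
          rw [valueFn_zero_pair, ← hdiff t]
          simp only [hw, hw']
          field_simp
      _ = M * ((∑ t ∈ F, w t * valueFn ({0, d} : Set (Θ → ℝ)) t)
            - ∑ t ∈ F, w' t * valueFn ({0, d} : Set (Θ → ℝ)) t) := by
          rw [← Finset.sum_sub_distrib, Finset.mul_sum]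
          exact Finset.sum_congr rfl fun t _ => by ring
      _ = 0 := by rw [hA, sub_self, mul_zero]

lemma indep_of_identified {𝒯 : Set (Θ → ℝ)} (h𝒯 : 𝒯 ⊆ stdSimplex ℝ Θ) (h𝒯c : IsClosed 𝒯)
    (hid : Identified 𝒯) : Indep 𝒯 := by
  classical
  intro F hF c hrel
  have hone : ∀ t ∈ F, ∑ θ, t θ = 1 := fun t ht => (h𝒯 (hF ht)).2
  have hc0 : ∑ t ∈ F, c t = 0 := sum_c_zero hone hrel
  set cp : (Θ → ℝ) → ℝ := fun t => max (c t) 0 with hcp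
  set cm : (Θ → ℝ) → ℝ := fun t => max (-c t) 0 with hcm
  have hdiff : ∀ t, cp t - cm t = c t := fun t => max_sub_max_neg (c t)
  have hcpn : ∀ t, 0 ≤ cp t := fun t => le_max_right _ _
  have hcmn : ∀ t, 0 ≤ cm t := fun t => le_max_right _ _
  set M := ∑ t ∈ F, cp t with hM
  have hMm : ∑ t ∈ F, cm t = M := by
    have h2 : ∑ t ∈ F, (cp t - cm t) = 0 := by
      rw [Finset.sum_congr rfl fun t _ => hdiff t]; exact hc0
    rw [Finset.sum_sub_distrib] at h2
    linarith
  intro t0 ht0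
  by_cases hM0 : M = 0
  · have hsum0 : ∑ t ∈ F, cp t = 0 := by rw [← hM]; exact hM0
    have hsum0' : ∑ t ∈ F, cm t = 0 := by rw [hMm]; exact hM0
    have h1 : cp t0 = 0 :=
      (Finset.sum_eq_zero_iff_of_nonneg fun t _ => hcpn t).mp hsum0 t0 ht0
    have h2 : cm t0 = 0 :=
      (Finset.sum_eq_zero_iff_of_nonneg fun t _ => hcmn t).mp hsum0' t0 ht0
    have := hdiff t0
    linarith
  · have hMpos : 0 < M :=
      lt_of_le_of_ne (Finset.sum_nonneg fun t _ => hcpn t) (Ne.symm hM0)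
    set w : (Θ → ℝ) → ℝ := fun t => cp t / M with hw
    set w' : (Θ → ℝ) → ℝ := fun t => cm t / M with hw'
    have h𝒯m : MeasurableSet 𝒯 := h𝒯c.measurableSet
    have hwn : ∀ t ∈ F, 0 ≤ w t := fun t _ => div_nonneg (hcpn t) hMpos.le
    have hwn' : ∀ t ∈ F, 0 ≤ w' t := fun t _ => div_nonneg (hcmn t) hMpos.le
    have hw1 : ∑ t ∈ F, w t = 1 := by
      rw [hw, ← Finset.sum_div, ← hM, div_self hM0]
    have hw1' : ∑ t ∈ F, w' t = 1 := by
      rw [hw', ← Finset.sum_div, hMm, div_self hM0]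
    have hinfo : IsInfoStructure 𝒯 (combo F w) :=
      ⟨combo_isProbability F w hwn hw1, combo_compl F w h𝒯m hF⟩
    have hinfo' : IsInfoStructure 𝒯 (combo F w') :=
      ⟨combo_isProbability F w' hwn' hw1', combo_compl F w' h𝒯m hF⟩
    have hskill : skillDist 𝒯 (combo F w) = skillDist 𝒯 (combo F w') := by
      rw [skillDist_combo h𝒯m F hF w hwn, skillDist_combo h𝒯m F hF w' hwn']
      funext θ
      have hsub : ∑ t ∈ F, (cp t * t θ - cm t * t θ) = 0 := by
        rw [Finset.sum_congr rfl fun t (_ : t ∈ F) =>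
          (sub_mul (cp t) (cm t) (t θ)).symm]
        rw [Finset.sum_congr rfl fun t (_ : t ∈ F) => by rw [hdiff t]]
        exact hrel θ
      rw [Finset.sum_sub_distrib] at hsub
      simp only [hw, hw', div_mul_eq_mul_div]
      rw [← Finset.sum_div, ← Finset.sum_div]
      congr 1
      linarith
    have heq := hid (combo F w) (combo F w') hinfo hinfo' hskill
    have happ : combo F w {t0} = combo F w' {t0} := by rw [heq]
    have ev : ∀ u : (Θ → ℝ) → ℝ,
        ∑ t ∈ F, ENNReal.ofReal (u t) * ({t0} : Set (Θ → ℝ)).indicator 1 t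
          = ENNReal.ofReal (u t0) := by
      intro u
      rw [Finset.sum_eq_single_of_mem t0 ht0 ?_]
      · rw [Set.indicator_of_mem (Set.mem_singleton t0), Pi.one_apply, mul_one]
      · intro t _ hne
        rw [Set.indicator_of_notMem (by simpa using hne), mul_zero]
    rw [combo_apply F w (measurableSet_singleton t0),
      combo_apply F w' (measurableSet_singleton t0), ev w, ev w'] at happ
    have hwe : w t0 = w' t0 :=
      (ENNReal.ofReal_eq_ofReal_iff (hwn t0 ht0) (hwn' t0 ht0)).mp happ
    have hcc : cp t0 = cm t0 := by
      simp only [hw, hw'] at hwe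
      field_simp at hwe
      exact hwe
    have := hdiff t0
    linarith

end Aux5

section Aux6
variable {Θ : Type*} [Fintype Θ]

lemma rep_measure {𝒯 : Set (Θ → ℝ)} (hfin : 𝒯.Finite) (h𝒯m : MeasurableSet 𝒯)
    {π : Measure (Θ → ℝ)} (hprob : IsProbabilityMeasure π) (hc : π 𝒯ᶜ = 0) :
    π = combo hfin.toFinset (fun t => (π {t}).toReal) := by
  classical
  ext s hs
  rw [combo_apply _ _ hs]
  have hne : ∀ t : Θ → ℝ, π {t} ≠ ⊤ := fun t => measure_ne_top π _
  rw [Finset.sum_congr rfl fun t (_ : t ∈ hfin.toFinset) => by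
    rw [ENNReal.ofReal_toReal (hne t)]]
  have hπs : π s = π (s ∩ 𝒯) := by
    have hd : π (s \ 𝒯) = 0 :=
      measure_mono_null (fun x hx => hx.2) hc
    have := measure_inter_add_diff s h𝒯m (μ := π)
    rw [hd, add_zero] at this
    exact this.symm
  have hcover : s ∩ 𝒯 = ⋃ t ∈ hfin.toFinset.filter (· ∈ s), ({t} : Set (Θ → ℝ)) := by
    ext x
    simp only [Set.mem_inter_iff, Set.mem_iUnion, Finset.mem_filter,
      hfin.mem_toFinset, Set.mem_singleton_iff]
    constructor
    · rintro ⟨hxs, hx𝒯⟩; exact ⟨x, ⟨hx𝒯, hxs⟩, rfl⟩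
    · rintro ⟨t, ⟨ht𝒯, hts⟩, rfl⟩; exact ⟨hts, ht𝒯⟩
  rw [hπs, hcover, measure_biUnion_finset ?disj ?meas]
  · rw [Finset.sum_filter]
    refine Finset.sum_congr rfl fun t _ => ?_
    by_cases h : t ∈ s
    · rw [if_pos h, Set.indicator_of_mem h, Pi.one_apply, mul_one]
    · rw [if_neg h, Set.indicator_of_notMem h, mul_zero]
  case disj =>
    intro a _ b _ hab
    exact Set.disjoint_singleton.mpr hab
  case meas => exact fun b _ => measurableSet_singleton b

lemma identified_of_indep {𝒯 : Set (Θ → ℝ)} (h𝒯 : 𝒯 ⊆ stdSimplex ℝ Θ)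
    (h𝒯c : IsClosed 𝒯) (hI : Indep 𝒯) : Identified 𝒯 := by
  classical
  have hfin : 𝒯.Finite := (indep_linearIndependent hI).setFinite
  have h𝒯m : MeasurableSet 𝒯 := h𝒯c.measurableSet
  intro π π' hπ hπ' hskill
  set F := hfin.toFinset with hFdef
  have hFsub : ↑F ⊆ 𝒯 := by rw [hFdef]; simp [hfin.coe_toFinset]
  set u : (Θ → ℝ) → ℝ := fun t => (π {t}).toReal with hu
  set u' : (Θ → ℝ) → ℝ := fun t => (π' {t}).toReal with hu'
  have hun : ∀ t ∈ F, 0 ≤ u t := fun t _ => ENNReal.toReal_nonneg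
  have hun' : ∀ t ∈ F, 0 ≤ u' t := fun t _ => ENNReal.toReal_nonneg
  have hrep : π = combo F u := rep_measure hfin h𝒯m hπ.1 hπ.2
  have hrep' : π' = combo F u' := rep_measure hfin h𝒯m hπ'.1 hπ'.2
  rw [hrep, hrep'] at hskill
  rw [skillDist_combo h𝒯m F hFsub u hun, skillDist_combo h𝒯m F hFsub u' hun'] at hskill
  have hrel : ∀ θ, ∑ t ∈ F, (u t - u' t) * t θ = 0 := by
    intro θ
    have := congrFun hskill θ
    rw [Finset.sum_congr rfl fun t (_ : t ∈ F) => sub_mul (u t) (u' t) (t θ),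
      Finset.sum_sub_distrib]
    linarith
  have hz := hI F hFsub (fun t => u t - u' t) hrel
  rw [hrep, hrep']
  simp only [combo]
  refine Finset.sum_congr rfl fun t ht => ?_
  have : u t = u' t := by have := hz t ht; linarith
  rw [this]

lemma fv_of_fvb {𝒯 : Set (Θ → ℝ)} (hfvb : FairValuationsBinary 𝒯) :
    FairValuations 𝒯 := by
  classical
  intro A hAf hAne
  obtain ⟨F, rfl⟩ : ∃ F : Finset (Θ → ℝ), ↑F = A := ⟨hAf.toFinset, hAf.coe_toFinset⟩
  clear hAf
  revert hAne
  induction F using Finset.induction_on with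
  | empty => intro h; simp at h
  | @insert a G ha ih =>
    intro _
    rcases G.eq_empty_or_nonempty with rfl | hGne
    · obtain ⟨α, hα⟩ := hfvb {a} (Or.inl (Set.ncard_singleton a))
      refine ⟨α, fun t ht => ?_⟩
      rw [show ((insert a ∅ : Finset (Θ → ℝ)) : Set (Θ → ℝ)) = {a} by simp]
      exact hα t ht
    · obtain ⟨β, hβ⟩ := ih (by exact_mod_cast hGne)
      obtain ⟨α, hα⟩ := hfvb {a, β} (binary_pair a β)
      refine ⟨α, fun t ht => ?_⟩
      rw [Finset.coe_insert,
        valueFn_insert a G.finite_toSet (by exact_mod_cast hGne) t,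
        hβ t ht, ← valueFn_pair]
      exact hα t ht

lemma nd_of_fair {𝒯 : Set (Θ → ℝ)} (h𝒯 : 𝒯 ⊆ stdSimplex ℝ Θ) (h𝒯c : IsClosed 𝒯)
    (hfv : FairValuations 𝒯) : NonDiscriminatory 𝒯 := by
  intro π π' hπ hπ' A hAf hAne hskill
  obtain ⟨α, hα⟩ := hfv A hAf hAne
  have h𝒯m : MeasurableSet 𝒯 := h𝒯c.measurableSet
  have key : ∀ μ : Measure (Θ → ℝ), IsProbabilityMeasure μ →
      ∫ t in 𝒯, valueFn A t ∂μ = ∑ θ, α θ * skillDist 𝒯 μ θ := by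
    intro μ hμ
    haveI := hμ
    have hint : ∀ θ : Θ, Integrable (fun t : Θ → ℝ => α θ * t θ) (μ.restrict 𝒯) := by
      intro θ
      refine ⟨(continuous_const.mul (continuous_apply θ)).aestronglyMeasurable, ?_⟩
      refine HasFiniteIntegral.of_bounded (C := |α θ|) ?_
      filter_upwards [ae_restrict_mem h𝒯m] with t ht
      have h0 : 0 ≤ t θ := (h𝒯 ht).1 θ
      have h1 : t θ ≤ 1 := by
        have hs := (h𝒯 ht).2
        have hle : t θ ≤ ∑ θ', t θ' :=
          Finset.single_le_sum (fun θ' _ => (h𝒯 ht).1 θ') (Finset.mem_univ θ)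
        linarith
      rw [Real.norm_eq_abs, abs_mul]
      calc |α θ| * |t θ| ≤ |α θ| * 1 := by
            refine mul_le_mul_of_nonneg_left ?_ (abs_nonneg _)
            rw [abs_of_nonneg h0]; exact h1
        _ = |α θ| := mul_one _
    rw [setIntegral_congr_fun h𝒯m (fun t ht => hα t ht)]
    rw [integral_finset_sum Finset.univ fun θ _ => hint θ]
    exact Finset.sum_congr rfl fun θ _ => integral_const_mul (α θ) _
  rw [key π hπ.1, key π' hπ'.1, hskill]

end Aux6

variable {Θ : Type*} [Fintype Θ] [Nonempty Θ]

theorem stmt1 (𝒯 : Set (Θ → ℝ)) (h𝒯 : 𝒯 ⊆ stdSimplex ℝ Θ) (h𝒯c : IsClosed 𝒯) :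
    List.TFAE [NonDiscriminatory 𝒯, NonDiscriminatoryBinary 𝒯, Identified 𝒯,
      FairValuations 𝒯, FairValuationsBinary 𝒯] := by
  tfae_have 1 → 2 := by
    intro h π π' hπ hπ' A hA hskill
    exact h π π' hπ hπ' A hA.finite hA.nonempty hskill
  tfae_have 2 → 3 := fun h => identified_of_indep h𝒯 h𝒯c (indep_of_ndb h𝒯 h𝒯c h)
  tfae_have 3 → 4 := by
    intro h A hAf hAne
    exact indep_fair (indep_of_identified h𝒯 h𝒯c h) (valueFn A)
  tfae_have 4 → 5 := fun h A hA => h A hA.finite hA.nonempty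
  tfae_have 5 → 3 := fun h => identified_of_indep h𝒯 h𝒯c (indep_of_fvb h𝒯 h)
  tfae_have 4 → 1 := nd_of_fair h𝒯 h𝒯c
  tfae_finish
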